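/- arXiv:1512.08757 — 3 statements merged into one kernel-verified Lean document; each statement's English description precedes it below -/
import Mathlib

section
/- Let G = (V,E) be a finite simple graph with n = |V|, let W ⊆ V be a maximal clique of G, and let c ∈ ℝ^V, d ∈ ℝ be such that cᵀx ≤ d is valid for F_W = {x ∈ STAB(G) : x_W = 1} with support H = {v ∈ V : c_v ≠ 0}, and assume there exist n−1 affinely independent points in {x ∈ F_W : cᵀx = d} (i.e., cᵀx ≤ d is facet-defining for F_W). Set λ = d − α(G[H \ W], c) and f(x) = (cᵀx − d) − λ(x_W − 1). Then there exist n affinely independent points in {x ∈ STAB(G) : f(x) = 0}; in particular f(x) ≤ 0 is facet-defining for STAB(G). -/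
open Finset

variable {V : Type*}

/-- A stable (independent) set of a graph: pairwise non-adjacent vertices. -/
def IsStable (G : SimpleGraph V) (S : Finset V) : Prop :=
  ∀ u ∈ S, ∀ v ∈ S, ¬ G.Adj u v

/-- The characteristic vectors of stable sets of `G`. -/
def stableVecs [DecidableEq V] (G : SimpleGraph V) : Set (V → ℝ) :=
  {x | ∃ S : Finset V, IsStable G S ∧ x = fun v => if v ∈ S then (1 : ℝ) else 0}

/-- The stable set polytope `STAB(G)`. -/
def STAB [DecidableEq V] (G : SimpleGraph V) : Set (V → ℝ) :=
  convexHull ℝ (stableVecs G)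

/-- `x_W = ∑_{v ∈ W} x_v`. -/
def vsum (W : Finset V) (x : V → ℝ) : ℝ := ∑ v ∈ W, x v

/-- The clique projection `G|W`: add every non-edge `uv` with `W ⊆ N(u) ∪ N(v)`. -/
def cliqueProj (G : SimpleGraph V) (W : Finset V) : SimpleGraph V where
  Adj u v := G.Adj u v ∨ (u ≠ v ∧ ¬G.Adj u v ∧ ∀ w ∈ W, G.Adj w u ∨ G.Adj w v)
  symm := by
    constructor
    rintro u v (h | ⟨hne, hna, h⟩)
    · exact Or.inl h.symm
    · exact Or.inr ⟨hne.symm, fun h' => hna h'.symm, fun w hw => (h w hw).symm⟩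
  loopless := by
    constructor
    rintro u (h | ⟨hne, _, _⟩)
    · exact G.loopless.irrefl u h
    · exact hne rfl

/-- Iterated projected graphs: `G_0 = G`, `G_t = G_{t-1} | W_t`. -/
def projSeq (G : SimpleGraph V) (W : ℕ → Finset V) : ℕ → SimpleGraph V
  | 0 => G
  | t + 1 => cliqueProj (projSeq G W t) (W (t + 1))

/-- `F_t = {x ∈ STAB(G) : x_{W_j} = 1, j = 1, …, t}`. -/
def Fface [DecidableEq V] (G : SimpleGraph V) (W : ℕ → Finset V) (t : ℕ) : Set (V → ℝ) :=
  {x ∈ STAB G | ∀ j ∈ Finset.Icc 1 t, vsum (W j) x = 1}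

/-- `α(G[H], c)`: the maximum `c`-weight of a stable set of `G` contained in `H`. -/
noncomputable def alphaW (G : SimpleGraph V) (H : Finset V) (c : V → ℝ) : ℝ :=
  sSup {r : ℝ | ∃ S : Finset V, S ⊆ H ∧ IsStable G S ∧ r = ∑ v ∈ S, c v}

/-- `α(G[H])`: the maximum cardinality of a stable set of `G` contained in `H`. -/
noncomputable def alphaOn (G : SimpleGraph V) (H : Finset V) : ℕ :=
  sSup {k : ℕ | ∃ S : Finset V, S ⊆ H ∧ IsStable G S ∧ S.card = k}

/-- The stability number `α(G)`. -/
noncomputable def alphaNum [Fintype V] (G : SimpleGraph V) : ℕ :=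
  sSup {k : ℕ | ∃ S : Finset V, IsStable G S ∧ S.card = k}

/-- `cᵀx`. -/
def dotp [Fintype V] (c x : V → ℝ) : ℝ := ∑ v, c v * x v

/-- The affine dimension of a set of points. -/
noncomputable def affDim (s : Set (V → ℝ)) : ℕ := Module.finrank ℝ (vectorSpan ℝ s)

/-- Strong hypertree (with hyperedges of size `k`). -/
inductive IsStrongHypertree [DecidableEq V] (k : ℕ) : Finset V → Finset (Finset V) → Prop
  | base (V' : Finset V) : IsStrongHypertree k V' {V'}
  | step (V' : Finset V) (E : Finset (Finset V)) (v : V) (Wi : Finset V) :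
      v ∈ V' → v ∈ Wi → Wi ∈ E →
      (∃ Wj ∈ E, Wj ≠ Wi ∧ (Wi ∩ Wj).card = k - 1) →
      IsStrongHypertree k (V'.erase v) (E.erase Wi) →
      IsStrongHypertree k V' E

/-- Condition (I): `|W_t| = k` and the subgraph of `G_{t-1}` induced by `W_1 ∪ ⋯ ∪ W_t`
is `k`-partite with stable vertex classes `V_t^1, …, V_t^k`. -/
def CondI [DecidableEq V] (G : SimpleGraph V) (W : ℕ → Finset V)
    (Vc : ℕ → ℕ → Finset V) (k t : ℕ) : Prop :=
  (W t).card = k ∧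
  (Finset.Icc 1 k).biUnion (Vc t) = (Finset.Icc 1 t).biUnion W ∧
  (∀ i ∈ Finset.Icc 1 k, ∀ j ∈ Finset.Icc 1 k, i ≠ j → Disjoint (Vc t i) (Vc t j)) ∧
  (∀ i ∈ Finset.Icc 1 k, ∀ u ∈ Vc t i, ∀ v ∈ Vc t i, ¬(projSeq G W (t - 1)).Adj u v)

/-- Condition (II): `T_t = (V_t, {W_1, …, W_t})` is a strong hypertree. -/
def CondII [DecidableEq V] (W : ℕ → Finset V) (Vc : ℕ → ℕ → Finset V) (k t : ℕ) : Prop :=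
  IsStrongHypertree k ((Finset.Icc 1 k).biUnion (Vc t)) ((Finset.Icc 1 t).image W)

/-- Condition (III): every `w ∉ V_t` misses some class `V_t^i` in `G_{t-1}`. -/
def CondIII [DecidableEq V] (G : SimpleGraph V) (W : ℕ → Finset V)
    (Vc : ℕ → ℕ → Finset V) (k t : ℕ) : Prop :=
  ∀ w : V, w ∉ (Finset.Icc 1 k).biUnion (Vc t) →
    ∃ i ∈ Finset.Icc 1 k, ∀ u ∈ Vc t i, ¬(projSeq G W (t - 1)).Adj w u

/-- Condition (IV). -/
def CondIV [Fintype V] [DecidableEq V] (G : SimpleGraph V) (W : ℕ → Finset V)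
    (Vc : ℕ → ℕ → Finset V) (k r : ℕ) : Prop :=
  ∀ i ∈ Finset.Icc 1 (k - 1), ∀ t ∈ Finset.Icc 1 r, ∀ v ∈ W t ∩ Vc t i,
    ∀ w ∈ Finset.univ \ (Finset.Icc 1 k).biUnion (Vc r),
      (∃ z ∈ Vc r i, (projSeq G W r).Adj z w) →
      (G.Adj v w ∨ ∃ t' ∈ Finset.Icc 1 r,
        (projSeq G W (t' - 1)).IsClique (W t : Set V) ∧
        W t ≠ W t' ∧ (W t ∩ W t').card = k - 1 ∧
        v ∉ W t' ∧ ∃ v' ∈ W t' ∩ Vc r i, (projSeq G W (t' - 1)).Adj v' w)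

/-- Condition (V): no vertex of `V_t^k` has a neighbor in `V_r^0` in the graph `G_r`. -/
def CondV [Fintype V] [DecidableEq V] (G : SimpleGraph V) (W : ℕ → Finset V)
    (Vc : ℕ → ℕ → Finset V) (k r t : ℕ) : Prop :=
  ∀ v ∈ Vc t k, ∀ w ∈ Finset.univ \ (Finset.Icc 1 k).biUnion (Vc r),
    ¬(projSeq G W r).Adj v w

/-- `STAB(G[H])`, embedded in `ℝ^V` (coordinates outside `H` are zero). -/
def STABon [DecidableEq V] (G : SimpleGraph V) (H : Finset V) : Set (V → ℝ) :=
  convexHull ℝ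
    {x | ∃ S : Finset V, S ⊆ H ∧ IsStable G S ∧ x = fun v => if v ∈ S then (1 : ℝ) else 0}

/-- Extending an affinely independent family lying on the affine hyperplane `L = 1`
by a point with `L = 0` preserves affine independence. -/
lemma affineIndependent_snoc_of_linear {n : ℕ} {E : Type*} [AddCommGroup E] [Module ℝ E]
    (L : E →ₗ[ℝ] ℝ) {p : Fin n → E} {x₀ : E} (hp : AffineIndependent ℝ p)
    (hL1 : ∀ i, L (p i) = 1) (hL0 : L x₀ = 0) :
    AffineIndependent ℝ (Fin.snoc p x₀ : Fin (n + 1) → E) := by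
  classical
  rw [affineIndependent_iff] at hp ⊢
  intro s w hw hcomb
  set q : Fin (n + 1) → E := Fin.snoc p x₀ with hq
  have hLq : ∀ i : Fin (n + 1), L (q i) = if i = Fin.last n then 0 else 1 := by
    intro i
    rcases eq_or_ne i (Fin.last n) with h | h
    · simp [q, h, hL0]
    · obtain ⟨j, rfl⟩ := Fin.exists_castSucc_eq.mpr h
      simp [q, hL1, h]
  have hLc : ∑ i ∈ s, w i * L (q i) = 0 := by
    have := congrArg L hcomb
    simpa [map_sum, map_smul, smul_eq_mul] using this
  have hA : ∑ i ∈ s.erase (Fin.last n), w i = 0 := by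
    have h1 : ∑ i ∈ s.erase (Fin.last n), w i
        = ∑ i ∈ s.erase (Fin.last n), w i * L (q i) := by
      refine Finset.sum_congr rfl fun i hi => ?_
      rw [hLq i, if_neg (Finset.ne_of_mem_erase hi), mul_one]
    by_cases hl : Fin.last n ∈ s
    · rw [h1, Finset.sum_erase_eq_sub hl, hLc, hLq, if_pos rfl, mul_zero, sub_zero]
    · rw [h1, Finset.erase_eq_of_notMem hl, hLc]
  have wlast : Fin.last n ∈ s → w (Fin.last n) = 0 := by
    intro hl
    have := Finset.sum_erase_eq_sub (f := w) hl
    rw [hA, hw] at this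
    linarith
  -- reindex the non-last part
  set s₂ : Finset (Fin n) := Finset.univ.filter (fun j : Fin n => j.castSucc ∈ s) with hs₂
  have himg : s₂.image Fin.castSucc = s.erase (Fin.last n) := by
    ext i
    simp only [Finset.mem_image, Finset.mem_erase, hs₂, Finset.mem_filter,
      Finset.mem_univ, true_and]
    constructor
    · rintro ⟨j, hj, rfl⟩
      exact ⟨(Fin.castSucc_lt_last j).ne, hj⟩
    · rintro ⟨hne, hi⟩
      obtain ⟨j, rfl⟩ := Fin.exists_castSucc_eq.mpr hne
      exact ⟨j, hi, rfl⟩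
  have hinj : Set.InjOn Fin.castSucc (s₂ : Set (Fin n)) :=
    fun a _ b _ h => Fin.castSucc_injective n h
  have hsum2 : ∑ j ∈ s₂, w j.castSucc = 0 := by
    have := Finset.sum_image (f := w) (g := Fin.castSucc) (s := s₂)
      (fun a _ b _ h => Fin.castSucc_injective n h)
    rw [himg] at this
    rw [this] at hA
    exact hA
  have hcomb2 : ∑ j ∈ s₂, w j.castSucc • p j = 0 := by
    have h1 : ∑ j ∈ s₂, w j.castSucc • p j
        = ∑ j ∈ s₂, w j.castSucc • q j.castSucc := by
      refine Finset.sum_congr rfl fun j _ => ?_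
      rw [hq, Fin.snoc_castSucc]
    have h2 : ∑ j ∈ s₂, w j.castSucc • q j.castSucc
        = ∑ i ∈ s.erase (Fin.last n), w i • q i := by
      rw [← himg]
      exact (Finset.sum_image (f := fun i => w i • q i) (g := Fin.castSucc) (s := s₂)
        (fun a _ b _ h => Fin.castSucc_injective n h)).symm
    rw [h1, h2]
    by_cases hl : Fin.last n ∈ s
    · rw [Finset.sum_erase_eq_sub hl, hcomb, wlast hl, zero_smul, sub_zero]
    · rw [Finset.erase_eq_of_notMem hl, hcomb]
  have hall := hp s₂ (fun j => w j.castSucc) hsum2 hcomb2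
  intro i hi
  rcases eq_or_ne i (Fin.last n) with h | h
  · exact h ▸ wlast (h ▸ hi)
  · obtain ⟨j, rfl⟩ := Fin.exists_castSucc_eq.mpr h
    exact hall j (by simp [hs₂, hi])

/-- the lifting lemma (facet part). -/
theorem stmt3 {V : Type*} [Fintype V] [DecidableEq V] (G : SimpleGraph V)
    (W : Finset V) (hW : G.IsClique (W : Set V))
    (hmax : ∀ u ∉ W, ¬ G.IsClique ((insert u W : Finset V) : Set V))
    (c : V → ℝ) (d : ℝ)
    (hvalid : ∀ x ∈ STAB G, vsum W x = 1 → dotp c x ≤ d)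
    (hfacet : ∃ p : Fin (Fintype.card V - 1) → V → ℝ,
      (∀ i, p i ∈ STAB G ∧ vsum W (p i) = 1 ∧ dotp c (p i) = d) ∧
      AffineIndependent ℝ p) :
    ∃ p : Fin (Fintype.card V) → V → ℝ,
      (∀ i, p i ∈ STAB G ∧
        (dotp c (p i) - d) -
          (d - alphaW G ((Finset.univ.filter fun v => c v ≠ 0) \ W) c) *
            (vsum W (p i) - 1) = 0) ∧
      AffineIndependent ℝ p := by
  classical
  obtain ⟨p, hp, hpAI⟩ := hfacet
  set H : Finset V := (Finset.univ.filter fun v => c v ≠ 0) \ W with hH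
  set A : Set ℝ := {r : ℝ | ∃ S : Finset V, S ⊆ H ∧ IsStable G S ∧ r = ∑ v ∈ S, c v} with hA
  have hAne : A.Nonempty := ⟨0, ∅, by simp [IsStable]⟩
  have hAfin : A.Finite := by
    apply Set.Finite.subset (Set.finite_range fun S : Finset V => ∑ v ∈ S, c v)
    rintro r ⟨S, -, -, rfl⟩
    exact ⟨S, rfl⟩
  have hmem : sSup A ∈ A := hAne.csSup_mem hAfin
  obtain ⟨S₀, hS₀H, hS₀stab, hS₀sum⟩ := hmem
  have halpha : alphaW G H c = ∑ v ∈ S₀, c v := hS₀sum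
  set x₀ : V → ℝ := fun v => if v ∈ S₀ then (1 : ℝ) else 0 with hx₀
  have hx₀STAB : x₀ ∈ STAB G := subset_convexHull ℝ _ ⟨S₀, hS₀stab, rfl⟩
  have hx₀vsum : vsum W x₀ = 0 := by
    refine Finset.sum_eq_zero fun v hv => ?_
    have : v ∉ S₀ := fun hvS => (Finset.mem_sdiff.mp (hS₀H hvS)).2 hv
    simp [hx₀, this]
  have hx₀dot : dotp c x₀ = ∑ v ∈ S₀, c v := by
    unfold dotp
    simp only [hx₀, mul_ite, mul_one, mul_zero]
    rw [Finset.sum_ite_mem, Finset.univ_inter]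
  -- the new point satisfies the equation
  have hx₀eq : (dotp c x₀ - d) -
      (d - alphaW G H c) * (vsum W x₀ - 1) = 0 := by
    rw [hx₀dot, hx₀vsum, halpha]; ring
  have hpeq : ∀ i, (dotp c (p i) - d) -
      (d - alphaW G H c) * (vsum W (p i) - 1) = 0 := by
    intro i
    rw [(hp i).2.2, (hp i).2.1]; ring
  rcases Nat.eq_zero_or_pos (Fintype.card V) with hc0 | hcpos
  · have hempty : IsEmpty (Fin (Fintype.card V)) := by rw [hc0]; infer_instance
    refine ⟨fun _ => x₀, fun i => hempty.elim i, ?_⟩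
    have : Subsingleton (Fin (Fintype.card V)) := hempty.instSubsingleton
    exact affineIndependent_of_subsingleton ℝ _
  · have hcard : Fintype.card V - 1 + 1 = Fintype.card V := Nat.succ_pred_eq_of_pos hcpos
    set q' : Fin (Fintype.card V - 1 + 1) → V → ℝ := Fin.snoc p x₀ with hq'
    set L : (V → ℝ) →ₗ[ℝ] ℝ :=
      { toFun := fun x => ∑ v ∈ W, x v
        map_add' := fun x y => by simp [Finset.sum_add_distrib]
        map_smul' := fun r x => by simp [Finset.mul_sum] } with hL
    have hq'AI : AffineIndependent ℝ q' := by
      refine affineIndependent_snoc_of_linear L hpAI (fun i => ?_) ?_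
      · exact (hp i).2.1
      · exact hx₀vsum
    have hq'cond : ∀ j, q' j ∈ STAB G ∧ (dotp c (q' j) - d) -
        (d - alphaW G H c) * (vsum W (q' j) - 1) = 0 := by
      intro j
      refine Fin.lastCases ?_ (fun j' => ?_) j
      · rw [hq', Fin.snoc_last]; exact ⟨hx₀STAB, hx₀eq⟩
      · rw [hq', Fin.snoc_castSucc]; exact ⟨(hp j').1, hpeq j'⟩
    set e : Fin (Fintype.card V) ≃ Fin (Fintype.card V - 1 + 1) := (finCongr hcard).symm
    refine ⟨q' ∘ e, fun i => hq'cond (e i), ?_⟩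
    exact (affineIndependent_equiv e).mpr hq'AI
end

section
/- Let G_0 = G and let W_1, …, W_r be such that each W_t is a clique of G_{t−1} and G_t = G_{t−1}|W_t, and let W_{r+1} be a clique of G_r. Define recursively, for t = r down to 1, λ^B_t = max{ x_{W_{r+1}} + Σ_{i=t+1}^r λ^B_i (x_{W_i} − 1) : x ∈ STAB(G_{t−1}), x_{W_t} = 0 } − 1. Then the inequality x_{W_{r+1}} + Σ_{t=1}^r λ^B_t (x_{W_t} − 1) ≤ 1 is valid for STAB(G). -/
open Finset

variable {V : Type*}

section AuxStmt5
variable {V : Type*} [Fintype V] [DecidableEq V]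

lemma vsum_smul_add' (W : Finset V) (a b : ℝ) (x y : V → ℝ) :
    vsum W (a • x + b • y) = a * vsum W x + b * vsum W y := by
  simp [vsum, Finset.sum_add_distrib, Finset.mul_sum]

lemma convex_le_one' (W' : Finset V) (T : Finset ℕ) (Wf : ℕ → Finset V) (lam : ℕ → ℝ)
    (s : Set (V → ℝ))
    (h : ∀ x ∈ s, vsum W' x + ∑ i ∈ T, lam i * (vsum (Wf i) x - 1) ≤ 1) :
    ∀ x ∈ convexHull ℝ s, vsum W' x + ∑ i ∈ T, lam i * (vsum (Wf i) x - 1) ≤ 1 := by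
  have hconv : Convex ℝ {x : V → ℝ |
      vsum W' x + ∑ i ∈ T, lam i * (vsum (Wf i) x - 1) ≤ 1} := by
    intro p hp q hq a b ha hb hab
    simp only [Set.mem_setOf_eq] at hp hq ⊢
    have key : vsum W' (a•p+b•q) + ∑ i ∈ T, lam i * (vsum (Wf i) (a•p+b•q) - 1)
        = a * (vsum W' p + ∑ i ∈ T, lam i * (vsum (Wf i) p - 1))
          + b * (vsum W' q + ∑ i ∈ T, lam i * (vsum (Wf i) q - 1)) := by
      rw [vsum_smul_add']
      have hterm : ∀ i ∈ T, lam i * (vsum (Wf i) (a•p+b•q) - 1)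
          = a * (lam i * (vsum (Wf i) p - 1)) + b * (lam i * (vsum (Wf i) q - 1)) := by
        intro i _
        rw [vsum_smul_add']
        linear_combination lam i * hab
      rw [Finset.sum_congr rfl hterm, Finset.sum_add_distrib, ← Finset.mul_sum,
        ← Finset.mul_sum]
      ring
    rw [key]
    nlinarith [mul_le_mul_of_nonneg_left hp ha, mul_le_mul_of_nonneg_left hq hb]
  exact fun x hx => convexHull_min h hconv hx

lemma STAB_mem_box' (G : SimpleGraph V) {x : V → ℝ} (hx : x ∈ STAB G) (v : V) :
    0 ≤ x v ∧ x v ≤ 1 := by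
  have hconv : Convex ℝ {x : V → ℝ | ∀ v, 0 ≤ x v ∧ x v ≤ 1} := by
    intro p hp q hq a b ha hb hab v
    have h1 := (hp v).1; have h2 := (hp v).2
    have h3 := (hq v).1; have h4 := (hq v).2
    constructor
    · have : (a • p + b • q) v = a * p v + b * q v := rfl
      rw [this]; nlinarith
    · have : (a • p + b • q) v = a * p v + b * q v := rfl
      rw [this]; nlinarith
  have hsub : stableVecs G ⊆ {x : V → ℝ | ∀ v, 0 ≤ x v ∧ x v ≤ 1} := by
    rintro y ⟨S, -, rfl⟩ v
    by_cases h : v ∈ S <;> simp [h]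
  exact convexHull_min hsub hconv hx v

lemma vsum_indicator' (W S : Finset V) :
    vsum W (fun v => if v ∈ S then (1:ℝ) else 0)
      = ((W.filter (· ∈ S)).card : ℝ) := by
  rw [vsum]
  rw [Finset.sum_boole]

lemma clique_filter_card_le' {G' : SimpleGraph V} {Wt S : Finset V}
    (hW : G'.IsClique (Wt : Set V)) (hS : IsStable G' S) :
    (Wt.filter (· ∈ S)).card ≤ 1 := by
  apply Finset.card_le_one.2
  intro a ha b hb
  simp only [Finset.mem_filter] at ha hb
  by_contra hne
  exact hS a ha.2 b hb.2 (hW (Finset.mem_coe.2 ha.1) (Finset.mem_coe.2 hb.1) hne)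

lemma stable_cliqueProj' {G' : SimpleGraph V} {Wt S : Finset V}
    (hS : IsStable G' S) {z : V} (hzS : z ∈ S) (hzW : z ∈ Wt) :
    IsStable (cliqueProj G' Wt) S := by
  rintro u hu v hv (h | ⟨hne, hna, h⟩)
  · exact hS u hu v hv h
  · rcases h z hzW with h' | h'
    · exact hS z hzS u hu h'
    · exact hS z hzS v hv h'

lemma bddAbove_vals' (G' : SimpleGraph V) (Wt W' : Finset V) (T : Finset ℕ)
    (Wf : ℕ → Finset V) (lam : ℕ → ℝ) :
    BddAbove {y : ℝ | ∃ x ∈ STAB G', vsum Wt x = 0 ∧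
      y = vsum W' x + ∑ i ∈ T, lam i * (vsum (Wf i) x - 1)} := by
  refine ⟨(W'.card : ℝ) + ∑ i ∈ T, |lam i| * ((Wf i).card + 1), ?_⟩
  rintro y ⟨x, hx, -, rfl⟩
  have hbox := fun v => STAB_mem_box' G' hx v
  have hv : ∀ (A : Finset V), 0 ≤ vsum A x ∧ vsum A x ≤ A.card := by
    intro A
    refine ⟨Finset.sum_nonneg fun v _ => (hbox v).1, ?_⟩
    calc vsum A x ≤ ∑ _v ∈ A, (1:ℝ) := Finset.sum_le_sum fun v _ => (hbox v).2
      _ = A.card := by simp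
  apply add_le_add (hv W').2
  apply Finset.sum_le_sum
  intro i _
  have h1 := (hv (Wf i)).1
  have h2 := (hv (Wf i)).2
  have habs : |vsum (Wf i) x - 1| ≤ (Wf i).card + 1 := by
    rw [abs_le]; constructor <;> nlinarith
  calc lam i * (vsum (Wf i) x - 1) ≤ |lam i * (vsum (Wf i) x - 1)| := le_abs_self _
    _ = |lam i| * |vsum (Wf i) x - 1| := abs_mul _ _
    _ ≤ |lam i| * ((Wf i).card + 1) := mul_le_mul_of_nonneg_left habs (abs_nonneg _)

end AuxStmt5

/-- validity of the basic lifting procedure. -/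
theorem stmt5 {V : Type*} [Fintype V] [DecidableEq V] (G : SimpleGraph V)
    (r : ℕ) (W : ℕ → Finset V)
    (hclique : ∀ t ∈ Finset.Icc 1 (r + 1),
      (projSeq G W (t - 1)).IsClique (W t : Set V))
    (lamB : ℕ → ℝ)
    (hlam : ∀ t ∈ Finset.Icc 1 r, lamB t =
      sSup {y : ℝ | ∃ x ∈ STAB (projSeq G W (t - 1)), vsum (W t) x = 0 ∧
        y = vsum (W (r + 1)) x +
          ∑ i ∈ Finset.Icc (t + 1) r, lamB i * (vsum (W i) x - 1)} - 1) :
    ∀ x ∈ STAB G,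
      vsum (W (r + 1)) x + ∑ t ∈ Finset.Icc 1 r, lamB t * (vsum (W t) x - 1) ≤ 1 := by
  have key : ∀ d t : ℕ, t + d = r + 1 → 1 ≤ t →
      ∀ x ∈ STAB (projSeq G W (t-1)),
        vsum (W (r+1)) x + ∑ i ∈ Finset.Icc t r, lamB i * (vsum (W i) x - 1) ≤ 1 := by
    intro d
    induction d with
    | zero =>
      intro t ht ht1 x hx
      have htr : t = r + 1 := by omega
      subst htr
      simp only [Nat.add_sub_cancel] at hx
      have hcl := hclique (r+1) (by simp)
      simp only [Nat.add_sub_cancel] at hcl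
      refine convex_le_one' (W (r+1)) (Finset.Icc (r+1) r) W lamB _ ?_ x hx
      rintro y ⟨S, hSstab, rfl⟩
      rw [Finset.Icc_eq_empty (by omega), Finset.sum_empty, add_zero, vsum_indicator']
      exact_mod_cast clique_filter_card_le' hcl hSstab
    | succ d ih =>
      intro t ht ht1 x hx
      have htr : t ≤ r := by omega
      have hcl := hclique t (Finset.mem_Icc.2 ⟨ht1, by omega⟩)
      refine convex_le_one' (W (r+1)) (Finset.Icc t r) W lamB _ ?_ x hx
      rintro y ⟨S, hSstab, rfl⟩
      have hsplit : Finset.Icc t r = insert t (Finset.Icc (t+1) r) := by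
        rw [Finset.Icc_add_one_left_eq_Ioc, Finset.Ioc_insert_left htr]
      rw [hsplit, Finset.sum_insert (by simp)]
      obtain ⟨m, rfl⟩ : ∃ m, t = m + 1 := ⟨t-1, by omega⟩
      simp only [Nat.add_sub_cancel] at hSstab hcl
      by_cases hne : ((W (m+1)).filter (· ∈ S)).Nonempty
      · -- S meets W t
        obtain ⟨z, hz⟩ := hne
        simp only [Finset.mem_filter] at hz
        have hcard : ((W (m+1)).filter (· ∈ S)).card = 1 :=
          le_antisymm (clique_filter_card_le' hcl hSstab)
            (Finset.card_pos.2 ⟨z, Finset.mem_filter.2 hz⟩)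
        have hv1 : vsum (W (m+1)) (fun v => if v ∈ S then (1:ℝ) else 0) = 1 := by
          rw [vsum_indicator', hcard]; norm_num
        have hstab' : IsStable (projSeq G W (m+1)) S := by
          show IsStable (cliqueProj (projSeq G W m) (W (m+1))) S
          exact stable_cliqueProj' hSstab hz.2 hz.1
        have hmem : (fun v => if v ∈ S then (1:ℝ) else 0) ∈ STAB (projSeq G W (m+1)) :=
          subset_convexHull ℝ _ ⟨S, hstab', rfl⟩
        have hih := ih (m+2) (by omega) (by omega) _ (by
          rw [show m + 2 - 1 = m + 1 by omega]; exact hmem)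
        rw [hv1]
        simp only [sub_self, mul_zero, zero_add]
        simpa using hih
      · -- S ∩ W t = ∅
        have hv0 : vsum (W (m+1)) (fun v => if v ∈ S then (1:ℝ) else 0) = 0 := by
          rw [vsum_indicator', Finset.not_nonempty_iff_eq_empty.1 hne]
          simp
        have hmem : (fun v => if v ∈ S then (1:ℝ) else 0) ∈ STAB (projSeq G W m) :=
          subset_convexHull ℝ _ ⟨S, hSstab, rfl⟩
        have hlamt := hlam (m+1) (Finset.mem_Icc.2 ⟨by omega, htr⟩)
        simp only [Nat.add_sub_cancel] at hlamt
        set y := (fun v => if v ∈ S then (1:ℝ) else 0) with hy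
        have hmemset : vsum (W (r+1)) y + ∑ i ∈ Finset.Icc (m+1+1) r,
            lamB i * (vsum (W i) y - 1) ∈
            {y : ℝ | ∃ x ∈ STAB (projSeq G W m), vsum (W (m+1)) x = 0 ∧
              y = vsum (W (r+1)) x + ∑ i ∈ Finset.Icc (m+1+1) r,
                lamB i * (vsum (W i) x - 1)} := ⟨y, hmem, hv0, rfl⟩
        have hbdd := bddAbove_vals' (projSeq G W m) (W (m+1)) (W (r+1))
          (Finset.Icc (m+1+1) r) W lamB
        have hle := le_csSup hbdd hmemset
        rw [hv0]
        have : sSup {y : ℝ | ∃ x ∈ STAB (projSeq G W m), vsum (W (m+1)) x = 0 ∧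
            y = vsum (W (r+1)) x + ∑ i ∈ Finset.Icc (m+1+1) r,
              lamB i * (vsum (W i) x - 1)} = lamB (m+1) + 1 := by
          rw [hlamt]; ring
        rw [this] at hle
        linarith
  intro x hx
  exact key r 1 (by omega) le_rfl x hx
end

section
/- Let G_0 = G, let W_1, …, W_r be such that each W_t is a clique of G_{t−1} and G_t = G_{t−1}|W_t, let F_t = {x ∈ STAB(G) : x_{W_j} = 1 for j = 1,…,t}, fix t ∈ {1,…,r}, and suppose for some k > 0: (I) for every ℓ ≤ t, |W_ℓ| = k and the subgraph of G_{ℓ−1} induced by ∪_{i=1}^ℓ W_i is k-partite with stable vertex classes V_ℓ^1,…,V_ℓ^k; (II) T_t = (V_t, {W_1,…,W_t}) with V_t = ∪_{i=1}^k V_t^i is a strong hypertree. Then for every x ∈ F_t, every i ∈ {1,…,k}, and every pair of vertices u, v ∈ V_t^i, one has x_u = x_v. -/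
open Finset

variable {V : Type*}

lemma projSeq_adj_mono (G : SimpleGraph V) (W : ℕ → Finset V) {m n : ℕ} (h : m ≤ n)
    {u v : V} (hadj : (projSeq G W m).Adj u v) : (projSeq G W n).Adj u v := by
  induction n with
  | zero =>
    have : m = 0 := by omega
    subst this; exact hadj
  | succ n ih =>
    rcases Nat.lt_or_ge m (n + 1) with h' | h'
    · exact Or.inl (ih (by omega))
    · have : m = n + 1 := by omega
      subst this; exact hadj

/-- Key induction on strong hypertrees: if every hyperedge has `x`-sum 1, card `k`,
and meets every class exactly once, then `x` is constant on each class. -/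
lemma key_hypertree [DecidableEq V] {k : ℕ} (hk : 0 < k) (Vc' : ℕ → Finset V) (x : V → ℝ)
    {V' : Finset V} {E : Finset (Finset V)} (hT : IsStrongHypertree k V' E) :
    (∀ Wl ∈ E, Wl.card = k) → (∀ Wl ∈ E, ∑ v ∈ Wl, x v = 1) →
    (∀ Wl ∈ E, ∀ i ∈ Finset.Icc 1 k, (Wl ∩ Vc' i).card = 1) →
    ∀ A ∈ E, ∀ B ∈ E, ∀ i ∈ Finset.Icc 1 k,
      ∀ u ∈ A ∩ Vc' i, ∀ v ∈ B ∩ Vc' i, x u = x v := by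
  induction hT with
  | base _ =>
    intro _ _ hmeet A hA B hB i hi u hu v hv
    have hAB : B = A := by
      rw [Finset.mem_singleton] at hA hB
      rw [hA, hB]
    rw [hAB] at hv
    obtain ⟨a, ha⟩ := Finset.card_eq_one.mp (hmeet A hA i hi)
    rw [ha, Finset.mem_singleton] at hu hv
    rw [hu, hv]
  | step V' E v0 Wi hv0V hv0Wi hWiE hEx hrec IH =>
    intro hcard hx hmeet
    obtain ⟨Wj, hWjE, hne, hinter⟩ := hEx
    have hWjE' : Wj ∈ E.erase Wi := Finset.mem_erase.mpr ⟨hne, hWjE⟩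
    -- cardinalities of the differences
    have hci : (Wi ∩ Wj).card + (Wi \ Wj).card = Wi.card :=
      Finset.card_inter_add_card_sdiff Wi Wj
    have hcj : (Wj ∩ Wi).card + (Wj \ Wi).card = Wj.card :=
      Finset.card_inter_add_card_sdiff Wj Wi
    have hji : (Wj ∩ Wi).card = k - 1 := by rw [Finset.inter_comm]; exact hinter
    have hdi : (Wi \ Wj).card = 1 := by
      rw [hcard Wi hWiE, hinter] at hci; omega
    have hdj : (Wj \ Wi).card = 1 := by
      rw [hcard Wj hWjE, hji] at hcj; omega
    -- transfer a vertex of an edge of `E` into an edge of `E.erase Wi`, preserving `x` and class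
    have trans : ∀ C ∈ E, ∀ i ∈ Finset.Icc 1 k, ∀ u ∈ C ∩ Vc' i,
        ∃ C' ∈ E.erase Wi, ∃ u' ∈ C' ∩ Vc' i, x u = x u' := by
      intro C hC i hi u hu
      by_cases hCWi : C = Wi
      · rw [hCWi] at hu
        rw [Finset.mem_inter] at hu
        by_cases huWj : u ∈ Wj
        · exact ⟨Wj, hWjE', u, Finset.mem_inter.mpr ⟨huWj, hu.2⟩, rfl⟩
        · -- u is the unique vertex of Wi \ Wj
          have huD : Wi \ Wj = {u} := by
            obtain ⟨a, ha⟩ := Finset.card_eq_one.mp hdi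
            have : u ∈ Wi \ Wj := Finset.mem_sdiff.mpr ⟨hu.1, huWj⟩
            rw [ha] at this ⊢
            rw [Finset.mem_singleton] at this
            rw [this]
          -- z : the unique vertex of Wj in class i
          obtain ⟨z, hz⟩ := Finset.card_eq_one.mp (hmeet Wj hWjE i hi)
          have hzWj : z ∈ Wj ∧ z ∈ Vc' i := by
            have : z ∈ Wj ∩ Vc' i := by rw [hz]; exact Finset.mem_singleton_self z
            exact Finset.mem_inter.mp this
          have hzWi : z ∉ Wi := by
            intro hzi
            have : z ∈ Wi ∩ Vc' i := Finset.mem_inter.mpr ⟨hzi, hzWj.2⟩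
            obtain ⟨a, ha⟩ := Finset.card_eq_one.mp (hmeet Wi hWiE i hi)
            have h1 : z = a := by rwa [ha, Finset.mem_singleton] at this
            have h2 : u = a := by
              have : u ∈ Wi ∩ Vc' i := Finset.mem_inter.mpr ⟨hu.1, hu.2⟩
              rwa [ha, Finset.mem_singleton] at this
            exact huWj (h2 ▸ h1 ▸ hzWj.1)
          have hzD : Wj \ Wi = {z} := by
            obtain ⟨a, ha⟩ := Finset.card_eq_one.mp hdj
            have : z ∈ Wj \ Wi := Finset.mem_sdiff.mpr ⟨hzWj.1, hzWi⟩
            rw [ha] at this ⊢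
            rw [Finset.mem_singleton] at this
            rw [this]
          -- x u = x z from the two sum-1 equations
          have hsi : ∑ v ∈ Wi \ Wj, x v + ∑ v ∈ Wi ∩ Wj, x v = ∑ v ∈ Wi, x v := by
            rw [← Finset.sdiff_inter_self_left Wi Wj]
            exact Finset.sum_sdiff Finset.inter_subset_left
          have hsj : ∑ v ∈ Wj \ Wi, x v + ∑ v ∈ Wj ∩ Wi, x v = ∑ v ∈ Wj, x v := by
            rw [← Finset.sdiff_inter_self_left Wj Wi]
            exact Finset.sum_sdiff Finset.inter_subset_left
          rw [huD, Finset.sum_singleton, hx Wi hWiE] at hsi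
          rw [hzD, Finset.sum_singleton, hx Wj hWjE, Finset.inter_comm] at hsj
          have hxuz : x u = x z := by linarith
          exact ⟨Wj, hWjE', z, Finset.mem_inter.mpr ⟨hzWj.1, hzWj.2⟩, hxuz⟩
      · exact ⟨C, Finset.mem_erase.mpr ⟨hCWi, hC⟩, u, hu, rfl⟩
    -- now combine
    intro A hA B hB i hi u hu v hv
    obtain ⟨A', hA', u', hu', hxu⟩ := trans A hA i hi u hu
    obtain ⟨B', hB', v', hv', hxv⟩ := trans B hB i hi v hv
    rw [hxu, hxv]
    exact IH (fun Wl h => hcard Wl (Finset.mem_of_mem_erase h))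
      (fun Wl h => hx Wl (Finset.mem_of_mem_erase h))
      (fun Wl h => hmeet Wl (Finset.mem_of_mem_erase h))
      A' hA' B' hB' i hi u' hu' v' hv'

lemma sum_eq_card_forall_eq_one {α : Type*} (s : Finset α) (c : α → ℕ)
    (hle : ∀ i ∈ s, c i ≤ 1) (hsum : ∑ i ∈ s, c i = s.card) : ∀ i ∈ s, c i = 1 := by
  by_contra h
  push_neg at h
  obtain ⟨i0, hi0, hne⟩ := h
  have hlt : ∑ i ∈ s, c i < ∑ i ∈ s, 1 :=
    Finset.sum_lt_sum hle ⟨i0, hi0, by have := hle i0 hi0; omega⟩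
  rw [Finset.sum_const, smul_eq_mul, mul_one] at hlt
  omega

/-- under conditions (I) and (II), any `x ∈ F_t` is constant on each
class `V_t^i`. -/
theorem stmt13 {V : Type*} [Fintype V] [DecidableEq V] (G : SimpleGraph V)
    (r : ℕ) (W : ℕ → Finset V)
    (hclique : ∀ t ∈ Finset.Icc 1 r, (projSeq G W (t - 1)).IsClique (W t : Set V))
    (k : ℕ) (hk : 0 < k) (Vc : ℕ → ℕ → Finset V)
    (t : ℕ) (ht : t ∈ Finset.Icc 1 r)
    (hI : ∀ l ∈ Finset.Icc 1 t, CondI G W Vc k l)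
    (hII : CondII W Vc k t) :
    ∀ x ∈ Fface G W t, ∀ i ∈ Finset.Icc 1 k,
      ∀ u ∈ Vc t i, ∀ v ∈ Vc t i, x u = x v := by
  intro x hx i hi u hu v hv
  rw [Finset.mem_Icc] at ht
  have ht1 : 1 ≤ t := ht.1
  have htt : t ∈ Finset.Icc 1 t := Finset.mem_Icc.mpr ⟨ht1, le_rfl⟩
  obtain ⟨hWtcard, hUnion, hdisj, hstable⟩ := hI t htt
  set E : Finset (Finset V) := (Finset.Icc 1 t).image W with hE
  -- each W l, l ∈ [1,t], is a clique of G_{t-1}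
  have hcliquet : ∀ l ∈ Finset.Icc 1 t, ∀ a ∈ W l, ∀ b ∈ W l, a ≠ b →
      (projSeq G W (t - 1)).Adj a b := by
    intro l hl a ha b hb hab
    rw [Finset.mem_Icc] at hl
    have hlr : l ∈ Finset.Icc 1 r := Finset.mem_Icc.mpr ⟨hl.1, le_trans hl.2 ht.2⟩
    have := hclique l hlr ha hb hab
    exact projSeq_adj_mono G W (by omega) this
  -- hypotheses of the key lemma
  have hcard : ∀ C ∈ E, C.card = k := by
    intro C hC
    obtain ⟨l, hl, rfl⟩ := Finset.mem_image.mp hC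
    exact (hI l hl).1
  have hxsum : ∀ C ∈ E, ∑ w ∈ C, x w = 1 := by
    intro C hC
    obtain ⟨l, hl, rfl⟩ := Finset.mem_image.mp hC
    exact hx.2 l hl
  have hmeet : ∀ C ∈ E, ∀ i ∈ Finset.Icc 1 k, (C ∩ Vc t i).card = 1 := by
    intro C hC
    obtain ⟨l, hl, rfl⟩ := Finset.mem_image.mp hC
    -- at most one vertex per class
    have hle : ∀ j ∈ Finset.Icc 1 k, (W l ∩ Vc t j).card ≤ 1 := by
      intro j hj
      apply Finset.card_le_one.mpr
      intro a ha b hb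
      rw [Finset.mem_inter] at ha hb
      by_contra hab
      exact hstable j hj a ha.2 b hb.2 (hcliquet l hl a ha.1 b hb.1 hab)
    -- W l ⊆ union of the classes
    have hsub : W l ⊆ (Finset.Icc 1 k).biUnion (Vc t) := by
      rw [hUnion]
      exact Finset.subset_biUnion_of_mem W hl
    have hWeq : W l = (Finset.Icc 1 k).biUnion (fun j => W l ∩ Vc t j) := by
      apply Finset.Subset.antisymm
      · intro a ha
        obtain ⟨j, hj, haj⟩ := Finset.mem_biUnion.mp (hsub ha)
        exact Finset.mem_biUnion.mpr ⟨j, hj, Finset.mem_inter.mpr ⟨ha, haj⟩⟩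
      · intro a ha
        obtain ⟨j, _, haj⟩ := Finset.mem_biUnion.mp ha
        exact (Finset.mem_inter.mp haj).1
    have hsumcard : ∑ j ∈ Finset.Icc 1 k, (W l ∩ Vc t j).card = k := by
      have hd : ∀ j1 ∈ (Finset.Icc 1 k : Finset ℕ), ∀ j2 ∈ (Finset.Icc 1 k : Finset ℕ),
          j1 ≠ j2 → Disjoint (W l ∩ Vc t j1) (W l ∩ Vc t j2) := by
        intro j1 h1 j2 h2 hne
        exact Finset.disjoint_of_subset_left Finset.inter_subset_right
          (Finset.disjoint_of_subset_right Finset.inter_subset_right (hdisj j1 h1 j2 h2 hne))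
      rw [← Finset.card_biUnion hd, ← hWeq]
      exact (hI l hl).1
    have hcardIcc : (Finset.Icc 1 k).card = k := by
      rw [Nat.card_Icc]; omega
    intro j hj
    exact sum_eq_card_forall_eq_one (Finset.Icc 1 k) (fun j => (W l ∩ Vc t j).card)
      hle (by rw [hsumcard, hcardIcc]) j hj
  -- locate u and v in edges
  have hub : u ∈ (Finset.Icc 1 t).biUnion W := by
    rw [← hUnion]
    exact Finset.mem_biUnion.mpr ⟨i, hi, hu⟩
  have hvb : v ∈ (Finset.Icc 1 t).biUnion W := by
    rw [← hUnion]
    exact Finset.mem_biUnion.mpr ⟨i, hi, hv⟩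
  obtain ⟨lu, hlu, hulu⟩ := Finset.mem_biUnion.mp hub
  obtain ⟨lv, hlv, hvlv⟩ := Finset.mem_biUnion.mp hvb
  exact key_hypertree hk (Vc t) x hII hcard hxsum hmeet
    (W lu) (Finset.mem_image_of_mem W hlu) (W lv) (Finset.mem_image_of_mem W hlv)
    i hi u (Finset.mem_inter.mpr ⟨hulu, hu⟩) v (Finset.mem_inter.mpr ⟨hvlv, hv⟩)
end
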